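/- arXiv:2203.11603 — 3 statements merged into one kernel-verified Lean document; each statement's English description precedes it below -/
import Mathlib

section
/- Let x^t ∈ {0,1}^n, let Q^t ∈ ℝ and U ∈ ℝ with Q^t ≤ U. Define the cut function c(x) = (Q^t − U)·(∑_{i: x^t_i=1} x_i − ∑_{i: x^t_i=0} x_i) + U − (Q^t − U)·(|{i : x^t_i = 1}| − 1) for x ∈ {0,1}^n. Then c(x^t) = Q^t, and for every binary x ≠ x^t one has c(x) ≥ U. -/
theorem stmt_2 (n : ℕ) (xt : Fin n → ℤ) (hxt : ∀ i, xt i = 0 ∨ xt i = 1)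
    (Qt U : ℝ) (hQU : Qt ≤ U)
    (c : (Fin n → ℤ) → ℝ)
    (hc : ∀ x, c x =
      (Qt - U) * (((∑ i ∈ Finset.univ.filter (fun i => xt i = 1), x i) -
        (∑ i ∈ Finset.univ.filter (fun i => xt i = 0), x i) : ℤ) : ℝ)
      + U - (Qt - U) * (((Finset.univ.filter (fun i => xt i = 1)).card : ℝ) - 1)) :
    c xt = Qt ∧
    ∀ x : Fin n → ℤ, (∀ i, x i = 0 ∨ x i = 1) → x ≠ xt → c x ≥ U := by
  set S := Finset.univ.filter (fun i => xt i = 1) with hS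
  set S0 := Finset.univ.filter (fun i => xt i = 0) with hS0
  constructor
  · rw [hc]
    have h1 : (∑ i ∈ S, xt i) = (S.card : ℤ) := by
      rw [Finset.sum_congr rfl (fun i hi => (Finset.mem_filter.mp hi).2)]
      simp [S]
    have h0 : (∑ i ∈ S0, xt i) = 0 :=
      Finset.sum_eq_zero (fun i hi => (Finset.mem_filter.mp hi).2)
    rw [h1, h0]; push_cast; ring
  · intro x hx hne
    rw [hc]
    have hD : (∑ i ∈ S, x i) - (∑ i ∈ S0, x i) ≤ (S.card : ℤ) - 1 := by
      obtain ⟨i, hi⟩ : ∃ i, x i ≠ xt i := by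
        by_contra h; push_neg at h; exact hne (funext h)
      have hxle : ∀ j ∈ S, x j ≤ 1 := fun j _ => by rcases hx j with h | h <;> omega
      have hx0 : ∀ j ∈ S0, 0 ≤ x j := fun j _ => by rcases hx j with h | h <;> omega
      rcases hxt i with h0 | h1
      · -- xt i = 0, so x i = 1, i ∈ S0
        have hiS0 : i ∈ S0 := Finset.mem_filter.mpr ⟨Finset.mem_univ i, h0⟩
        have hxi : x i = 1 := by rcases hx i with h | h <;> omega
        have h1' : 1 ≤ ∑ j ∈ S0, x j := by
          calc (1 : ℤ) = x i := hxi.symm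
          _ ≤ ∑ j ∈ S0, x j := Finset.single_le_sum hx0 hiS0
        have h2 : (∑ j ∈ S, x j) ≤ (S.card : ℤ) := by
          calc (∑ j ∈ S, x j) ≤ ∑ j ∈ S, 1 := Finset.sum_le_sum hxle
          _ = (S.card : ℤ) := by simp
        omega
      · -- xt i = 1, so x i = 0, i ∈ S
        have hiS : i ∈ S := Finset.mem_filter.mpr ⟨Finset.mem_univ i, h1⟩
        have hxi : x i = 0 := by rcases hx i with h | h <;> omega
        have h2 : (∑ j ∈ S, x j) ≤ (S.card : ℤ) - 1 := by
          rw [← Finset.sum_erase_add S x hiS, hxi, add_zero]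
          calc (∑ j ∈ S.erase i, x j) ≤ ∑ j ∈ S.erase i, 1 :=
            Finset.sum_le_sum (fun j hj => hxle j (Finset.mem_of_mem_erase hj))
          _ = ((S.erase i).card : ℤ) := by simp
          _ = (S.card : ℤ) - 1 := by
            rw [Finset.card_erase_of_mem hiS]
            have : 1 ≤ S.card := Finset.card_pos.mpr ⟨i, hiS⟩
            push_cast [Nat.cast_sub this]; ring
        have h3 : 0 ≤ ∑ j ∈ S0, x j := Finset.sum_nonneg hx0
        omega
    have hDr : (((∑ i ∈ S, x i) - (∑ i ∈ S0, x i) : ℤ) : ℝ) ≤ (S.card : ℝ) - 1 := by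
      push_cast; exact_mod_cast hD
    nlinarith [hDr, hQU]
end

section
/- Let x^t ∈ {0,1}^n, Q : {0,1}^n → ℝ a function, and U ∈ ℝ such that Q(x) ≤ U for all binary x. Define c(x) as in the integer L-shaped cut: c(x) = (Q(x^t) − U)·(∑_{i: x^t_i=1} x_i − ∑_{i: x^t_i=0} x_i − |{i : x^t_i=1}| + 1) + U. Then for every binary x, Q(x) ≤ c(x); i.e., the cut is valid: it never cuts off the true recourse value at any binary point. -/
theorem stmt_3 (n : ℕ) (xt : Fin n → ℤ) (hxt : ∀ i, xt i = 0 ∨ xt i = 1)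
    (Q : (Fin n → ℤ) → ℝ) (U : ℝ)
    (hU : ∀ x : Fin n → ℤ, (∀ i, x i = 0 ∨ x i = 1) → Q x ≤ U)
    (c : (Fin n → ℤ) → ℝ)
    (hc : ∀ x, c x =
      (Q xt - U) * ((((∑ i ∈ Finset.univ.filter (fun i => xt i = 1), x i) -
        (∑ i ∈ Finset.univ.filter (fun i => xt i = 0), x i) : ℤ) : ℝ)
        - ((Finset.univ.filter (fun i => xt i = 1)).card : ℝ) + 1) + U) :
    ∀ x : Fin n → ℤ, (∀ i, x i = 0 ∨ x i = 1) → Q x ≤ c x := by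
  intro x hx
  set T := Finset.univ.filter (fun i => xt i = 1) with hT
  set Z := Finset.univ.filter (fun i => xt i = 0) with hZ
  rw [hc]
  by_cases hxeq : x = xt
  · subst hxeq
    have hA : ∑ i ∈ T, x i = (T.card : ℤ) := by
      rw [Finset.sum_congr rfl (fun i hi => (Finset.mem_filter.mp hi).2)]
      rw [Finset.sum_const, nsmul_eq_mul, mul_one]
    have hB : ∑ i ∈ Z, x i = 0 := by
      apply Finset.sum_eq_zero
      intro i hi
      exact (Finset.mem_filter.mp hi).2
    rw [hA, hB]
    push_cast
    ring_nf
    exact le_refl _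
  · have hA_le : ∑ i ∈ T, x i ≤ (T.card : ℤ) := by
      calc ∑ i ∈ T, x i ≤ ∑ _i ∈ T, (1 : ℤ) := by
            apply Finset.sum_le_sum
            intro i _
            rcases hx i with h | h <;> omega
        _ = (T.card : ℤ) := by simp
    have hB_nonneg : (0 : ℤ) ≤ ∑ i ∈ Z, x i := by
      apply Finset.sum_nonneg
      intro i _
      rcases hx i with h | h <;> omega
    have hkey : ∑ i ∈ T, x i - ∑ i ∈ Z, x i ≤ (T.card : ℤ) - 1 := by
      by_contra hcon
      push_neg at hcon
      have hAeq : ∑ i ∈ T, x i = (T.card : ℤ) := by omega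
      have hBeq : ∑ i ∈ Z, x i = 0 := by omega
      apply hxeq
      funext i
      rcases hxt i with h0 | h1
      · have hiZ : i ∈ Z := Finset.mem_filter.mpr ⟨Finset.mem_univ i, h0⟩
        have := (Finset.sum_eq_zero_iff_of_nonneg (fun j _ => by
          rcases hx j with h | h <;> omega)).mp hBeq i hiZ
        omega
      · have hiT : i ∈ T := Finset.mem_filter.mpr ⟨Finset.mem_univ i, h1⟩
        by_contra hne
        have hi0 : x i = 0 := by rcases hx i with h | h; exact h; omega
        have hsplit : ∑ j ∈ T.erase i, x j + x i = ∑ j ∈ T, x j :=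
          Finset.sum_erase_add T x hiT
        have hle : ∑ j ∈ T.erase i, x j ≤ ((T.erase i).card : ℤ) := by
          calc ∑ j ∈ T.erase i, x j ≤ ∑ _j ∈ T.erase i, (1 : ℤ) := by
                apply Finset.sum_le_sum
                intro j _
                rcases hx j with h | h <;> omega
            _ = ((T.erase i).card : ℤ) := by simp
        have hcard : (T.erase i).card = T.card - 1 := Finset.card_erase_of_mem hiT
        have hpos : 1 ≤ T.card := Finset.card_pos.mpr ⟨i, hiT⟩
        omega
    have hQU : Q xt - U ≤ 0 := by
      have := hU xt hxt; linarith
    have hE : (((∑ i ∈ T, x i - ∑ i ∈ Z, x i : ℤ) : ℝ) - (T.card : ℝ) + 1) ≤ 0 := by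
      have h2 : ((∑ i ∈ T, x i - ∑ i ∈ Z, x i : ℤ) : ℝ) ≤ (T.card : ℝ) - 1 := by
        exact_mod_cast hkey
      linarith
    have hprod : 0 ≤ (Q xt - U) *
        (((∑ i ∈ T, x i - ∑ i ∈ Z, x i : ℤ) : ℝ) - (T.card : ℝ) + 1) := by
      nlinarith
    have := hU x hx
    linarith
end

section
/- Fix a zone i with a set V_i of vehicles available and an ordered list of requests r_1 < … < r_m all originating at i, all acceptable (i.e., their fee threshold is met). Under the first-come-first-served constraints — each vehicle serves at most one request, each request served by at most one vehicle, and a vehicle available at i must serve request r_k unless it has already been assigned to some request r_j with j < k or r_k is served by another vehicle — the number of served requests equals min(m, |V_i|), and the set of served requests is exactly {r_1, …, r_{min(m,|V_i|)}}. -/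
theorem stmt_7 {β : Type*} [DecidableEq β] (Vi : Finset β)
    (m : ℕ) (a : Fin m → Option β)
    (hmem : ∀ r v, a r = some v → v ∈ Vi)
    (hinj : ∀ r r' v, a r = some v → a r' = some v → r = r')
    (hfcfs : ∀ r, a r = none → ∀ v ∈ Vi, ∃ r', r' < r ∧ a r' = some v) :
    (Finset.univ.filter (fun r => (a r).isSome)).card = min m Vi.card ∧
    Finset.univ.filter (fun r => (a r).isSome) =
      Finset.univ.filter (fun r : Fin m => (r : ℕ) < min m Vi.card) := by
  classical
  set S := Finset.univ.filter (fun r : Fin m => (a r).isSome) with hS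
  have hmono : ∀ r r' : Fin m, r' ≤ r → (a r).isSome → (a r').isSome := by
    intro r r' hle hr
    by_contra h
    rw [Option.not_isSome_iff_eq_none] at h
    obtain ⟨v, hv⟩ := Option.isSome_iff_exists.mp hr
    obtain ⟨r'', hlt, hr''⟩ := hfcfs r' h v (hmem r v hv)
    have heq := hinj r'' r v hr'' hv
    subst heq
    exact absurd (lt_of_lt_of_le hlt hle) (lt_irrefl _)
  have hchar : ∀ r : Fin m, r ∈ S ↔ (r : ℕ) < S.card := by
    intro r
    constructor
    · intro hr
      have hsub : Finset.Iic r ⊆ S := by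
        intro x hx
        simp only [Finset.mem_Iic] at hx
        simp only [hS, Finset.mem_filter, Finset.mem_univ, true_and]
        exact hmono r x hx (by simpa [hS, Finset.mem_filter] using hr)
      have hc := Finset.card_le_card hsub
      rw [Fin.card_Iic] at hc
      omega
    · intro hr
      by_contra h
      have hsub : S ⊆ Finset.Iio r := by
        intro x hx
        simp only [Finset.mem_Iio]
        by_contra hx'
        push_neg at hx'
        refine h ?_
        simp only [hS, Finset.mem_filter, Finset.mem_univ, true_and]
        exact hmono x r hx' (by simpa [hS, Finset.mem_filter] using hx)
      have hc := Finset.card_le_card hsub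
      rw [Fin.card_Iio] at hc
      omega
  have hle1 : S.card ≤ m := by
    simpa using Finset.card_le_univ S
  have hinjS : Set.InjOn a S := by
    intro x hx y hy hxy
    simp only [hS, Finset.coe_filter, Set.mem_setOf_eq, Finset.mem_univ, true_and] at hx
    obtain ⟨v, hv⟩ := Option.isSome_iff_exists.mp hx
    exact hinj x y v hv (hxy ▸ hv)
  have hle2 : S.card ≤ Vi.card := by
    have h1 : S.card = (S.image a).card := (Finset.card_image_of_injOn hinjS).symm
    have h2 : S.image a ⊆ Vi.image some := by
      intro o ho
      simp only [Finset.mem_image] at ho ⊢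
      obtain ⟨r, hr, hro⟩ := ho
      have hr' : (a r).isSome := by simpa [hS, Finset.mem_filter] using hr
      obtain ⟨v, hv⟩ := Option.isSome_iff_exists.mp hr'
      exact ⟨v, hmem r v hv, by rw [← hro, hv]⟩
    have h3 := Finset.card_le_card h2
    rw [Finset.card_image_of_injective Vi (Option.some_injective β)] at h3
    omega
  have hge : min m Vi.card ≤ S.card := by
    rcases lt_or_ge S.card m with hlt | hge'
    · set r : Fin m := ⟨S.card, hlt⟩ with hrdef
      have hrn : a r = none := by
        have : r ∉ S := by rw [hchar]; simp [hrdef]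
        simpa [hS, Finset.mem_filter, Option.not_isSome_iff_eq_none] using this
      have hch : ∀ v ∈ Vi, ∃ r', r' < r ∧ a r' = some v := fun v hv => hfcfs r hrn v hv
      have hVle : Vi.card ≤ (Finset.Iio r).card := by
        apply Finset.card_le_card_of_injOn
          (fun v => if h : v ∈ Vi then (hch v h).choose else r)
        · intro v hv
          simp only [Finset.mem_coe] at hv ⊢
          simp only [hv, dif_pos, Finset.mem_Iio]
          exact (hch v hv).choose_spec.1
        · intro v hv w hw hvw
          simp only [Finset.mem_coe] at hv hw
          simp only [hv, hw, dif_pos] at hvw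
          have h1 := (hch v hv).choose_spec.2
          have h2 := (hch w hw).choose_spec.2
          rw [hvw, h2] at h1
          exact Option.some_injective β h1.symm
      rw [Fin.card_Iio] at hVle
      have hrv : (r : ℕ) = S.card := rfl
      omega
    · omega
  have hcard : S.card = min m Vi.card := le_antisymm (le_min hle1 hle2) hge
  refine ⟨hcard, ?_⟩
  ext r
  simp only [hS, Finset.mem_filter, Finset.mem_univ, true_and] at *
  rw [← hcard, ← hchar r]
end
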